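/- Let G be a finite group with normal subgroups G₁,…,Gₙ such that [Gᵢ,Gⱼ] = 1 for i ≠ j and G = G₁⋯Gₙ. If for each i a pronormal subgroup Hᵢ of Gᵢ is chosen and H = ⟨H₁,…,Hₙ⟩, then H is pronormal in G. -/

import Mathlib

open Pointwise
open scoped commutatorElement

def conjSub {G : Type*} [Group G] (H : Subgroup G) (g : G) : Subgroup G :=
  MulAut.conj g⁻¹ • H

def IsPronormal {G : Type*} [Group G] (H : Subgroup G) : Prop :=
  ∀ g : G, ∃ x ∈ H ⊔ conjSub H g, conjSub H x = conjSub H g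

lemma mem_conjSub {G : Type*} [Group G] {A : Subgroup G} {g x : G} :
    x ∈ conjSub A g ↔ ∃ a ∈ A, g⁻¹ * a * g = x := by
  simp [conjSub, Subgroup.mem_smul_pointwise_iff_exists, MulAut.smul_def, mul_assoc]

lemma conjSub_ext {G : Type*} [Group G] {A : Subgroup G} {g k : G}
    (h : ∀ a ∈ A, g⁻¹ * a * g = k⁻¹ * a * k) : conjSub A g = conjSub A k := by
  ext x
  simp only [mem_conjSub]
  constructor
  · rintro ⟨a, ha, rfl⟩; exact ⟨a, ha, (h a ha).symm⟩
  · rintro ⟨a, ha, rfl⟩; exact ⟨a, ha, h a ha⟩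

lemma conjSub_le {G : Type*} [Group G] {A K : Subgroup G} {g : G}
    (hA : A ≤ K) (hg : g ∈ K) : conjSub A g ≤ K := by
  intro x hx
  obtain ⟨a, ha, rfl⟩ := mem_conjSub.mp hx
  exact K.mul_mem (K.mul_mem (K.inv_mem hg) (hA ha)) hg

lemma conjSub_mono {G : Type*} [Group G] {A B : Subgroup G} (h : A ≤ B) (g : G) :
    conjSub A g ≤ conjSub B g := by
  intro x hx
  obtain ⟨a, ha, rfl⟩ := mem_conjSub.mp hx
  exact mem_conjSub.mpr ⟨a, h ha, rfl⟩

lemma conjSub_eq_map {G : Type*} [Group G] (A : Subgroup G) (g : G) :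
    conjSub A g = A.map (MulAut.conj g⁻¹).toMonoidHom := by
  ext x
  simp [mem_conjSub, Subgroup.mem_map, mul_assoc]

lemma conjSub_iSup {G : Type*} [Group G] {ι : Sort*} (A : ι → Subgroup G) (g : G) :
    conjSub (⨆ i, A i) g = ⨆ i, conjSub (A i) g := by
  simp_rw [conjSub_eq_map, Subgroup.map_iSup]

lemma map_conjSub {G G' : Type*} [Group G] [Group G'] (φ : G →* G') (A : Subgroup G) (g : G) :
    (conjSub A g).map φ = conjSub (A.map φ) (φ g) := by
  ext y
  simp only [Subgroup.mem_map, mem_conjSub]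
  constructor
  · rintro ⟨x, ⟨a, ha, rfl⟩, rfl⟩
    exact ⟨φ a, ⟨a, ha, rfl⟩, by simp [mul_assoc]⟩
  · rintro ⟨b, ⟨a, ha, rfl⟩, rfl⟩
    exact ⟨g⁻¹ * a * g, ⟨a, ha, rfl⟩, by simp [mul_assoc]⟩

lemma conj_noncommProd {G : Type*} [Group G] {n : ℕ} (Gs : Fin n → Subgroup G)
    (x : Fin n → G) (hx : ∀ j, x j ∈ Gs j)
    (hcomm' : ∀ i j, i ≠ j → ∀ a ∈ Gs i, ∀ b ∈ Gs j, Commute a b) (hc)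
    (i : Fin n) (h : G) (hh : h ∈ Gs i) :
    (Finset.univ.noncommProd x hc)⁻¹ * h * (Finset.univ.noncommProd x hc)
      = (x i)⁻¹ * h * (x i) := by
  classical
  rw [← Finset.noncommProd_erase_mul Finset.univ (Finset.mem_univ i) x hc]
  set z := (Finset.univ.erase i).noncommProd x _ with hzdef
  have hz : Commute h z := by
    apply Finset.noncommProd_commute
    intro j hj
    exact hcomm' i j (Ne.symm (Finset.ne_of_mem_erase hj)) h hh (x j) (hx j)
  have hz' : z⁻¹ * h * z = h := by
    rw [hz.symm.inv_left.eq, mul_assoc, inv_mul_cancel, mul_one]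
  calc (z * x i)⁻¹ * h * (z * x i) = (x i)⁻¹ * (z⁻¹ * h * z) * x i := by group
    _ = (x i)⁻¹ * h * x i := by rw [hz']

theorem stmt_3 {G : Type*} [Group G] [Finite G] (n : ℕ)
    (Gs : Fin n → Subgroup G) (hnorm : ∀ i, (Gs i).Normal)
    (hcomm : ∀ i j, i ≠ j → ⁅Gs i, Gs j⁆ = ⊥)
    (hgen : (⨆ i, Gs i) = ⊤)
    (Hs : Fin n → Subgroup G) (hle : ∀ i, Hs i ≤ Gs i)
    (hprn : ∀ i, IsPronormal ((Hs i).subgroupOf (Gs i))) :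
    IsPronormal (⨆ i, Hs i) := by
  classical
  intro g
  have hcomm' : ∀ i j, i ≠ j → ∀ a ∈ Gs i, ∀ b ∈ Gs j, Commute a b := by
    intro i j hij a ha b hb
    have h1 : ⁅a, b⁆ ∈ (⊥ : Subgroup G) :=
      (hcomm i j hij) ▸ Subgroup.commutator_mem_commutator ha hb
    exact commutatorElement_eq_one_iff_commute.mp (Subgroup.mem_bot.mp h1)
  -- decompose the conjugation action of g
  obtain ⟨f, hf, hfc⟩ : ∃ f : Fin n → G, (∀ j, f j ∈ Gs j) ∧
      ∀ i, ∀ h ∈ Gs i, g⁻¹ * h * g = (f i)⁻¹ * h * (f i) := by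
    have hg : g ∈ ⨆ i, Gs i := hgen ▸ Subgroup.mem_top g
    refine Subgroup.iSup_induction (C := fun y => ∃ f : Fin n → G, (∀ j, f j ∈ Gs j) ∧
      ∀ i, ∀ h ∈ Gs i, y⁻¹ * h * y = (f i)⁻¹ * h * (f i)) Gs hg ?_ ?_ ?_
    · intro j y hy
      refine ⟨fun i => if i = j then y else 1, fun i => ?_, fun i h hh => ?_⟩
      · by_cases hij : i = j
        · subst hij; simp [hy]
        · simp [hij, one_mem]
      · by_cases hij : i = j
        · subst hij; simp
        · simp only [if_neg hij]
          have hcm : Commute h y := hcomm' i j hij h hh y hy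
          rw [hcm.symm.inv_left.eq, mul_assoc, inv_mul_cancel, mul_one, inv_one, one_mul, mul_one]
    · exact ⟨fun _ => 1, fun _ => one_mem _, fun i h hh => by simp⟩
    · rintro y y' ⟨f, hfm, hfc⟩ ⟨f', hfm', hfc'⟩
      refine ⟨fun i => f i * f' i, fun i => mul_mem (hfm i) (hfm' i), fun i h hh => ?_⟩
      have e1 : (y * y')⁻¹ * h * (y * y') = y'⁻¹ * (y⁻¹ * h * y) * y' := by group
      rw [e1, hfc i h hh,
        hfc' i _ (mul_mem (mul_mem (inv_mem (hfm i)) hh) (hfm i))]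
      group
  -- for each i find a conjugating element within Gs i
  have key : ∀ i, ∃ y : G, y ∈ Gs i ∧ y ∈ Hs i ⊔ conjSub (Hs i) g ∧
      conjSub (Hs i) y = conjSub (Hs i) g := by
    intro i
    have hgf : conjSub (Hs i) g = conjSub (Hs i) (f i) :=
      conjSub_ext fun a ha => hfc i a (hle i ha)
    obtain ⟨x, hxmem, hxconj⟩ := hprn i ⟨f i, hf i⟩
    set φ := (Gs i).subtype with hφ
    have hmapH : ((Hs i).subgroupOf (Gs i)).map φ = Hs i := by
      rw [hφ, Subgroup.subgroupOf_map_subtype, inf_eq_left.mpr (hle i)]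
    have hconjmap : ∀ k : Gs i,
        (conjSub ((Hs i).subgroupOf (Gs i)) k).map φ = conjSub (Hs i) (k : G) := by
      intro k; rw [map_conjSub, hmapH]; rfl
    refine ⟨(x : G), x.2, ?_, ?_⟩
    · have hm : φ x ∈ ((Hs i).subgroupOf (Gs i) ⊔
          conjSub ((Hs i).subgroupOf (Gs i)) ⟨f i, hf i⟩).map φ :=
        Subgroup.mem_map_of_mem φ hxmem
      rw [Subgroup.map_sup, hmapH, hconjmap] at hm
      rw [hgf]
      exact hm
    · have hm := congrArg (Subgroup.map φ) hxconj
      rw [hconjmap, hconjmap] at hm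
      rw [hgf]
      exact hm
  choose x hxG hxmem hxconj using key
  have hcx : (↑(Finset.univ : Finset (Fin n)) : Set (Fin n)).Pairwise
      fun a b => Commute (x a) (x b) :=
    fun a _ b _ hab => hcomm' a b hab (x a) (hxG a) (x b) (hxG b)
  refine ⟨Finset.univ.noncommProd x hcx, ?_, ?_⟩
  · apply Subgroup.noncommProd_mem
    intro i _
    exact sup_le_sup (le_iSup Hs i) (conjSub_mono (le_iSup Hs i) g) (hxmem i)
  · rw [conjSub_iSup, conjSub_iSup]
    refine iSup_congr fun i => ?_
    have h1 : conjSub (Hs i) (Finset.univ.noncommProd x hcx) = conjSub (Hs i) (x i) :=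
      conjSub_ext fun a ha => conj_noncommProd Gs x hxG hcomm' hcx i a (hle i ha)
    rw [h1, hxconj i]
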